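/- arXiv:2603.15113 — 2 statements merged into one kernel-verified Lean document; each statement's English description precedes it below -/
import Mathlib

section
/- Let F be a field of characteristic different from 2, E/F a finite separable field extension, τ an F-algebra automorphism of E with τ ∘ τ = id, and x a nonzero element of E with τ(x) = −x. Then the F-bilinear form B_x on E defined by B_x(v, w) = Tr_{E/F}(v · τ(w) · x) is alternating (B_x(v, v) = 0 for all v ∈ E), nondegenerate (if B_x(v, w) = 0 for all w then v = 0, and if B_x(v, w) = 0 for all v then w = 0), and satisfies the adjunction B_x(a·v, w) = B_x(v, τ(a)·w) for all a, v, w ∈ E. In particular B_x is a symplectic F-bilinear form on the F-vector space E. -/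
/-- For a finite separable extension `E/F` with `char F ≠ 2`, an involutive `F`-algebra
automorphism `τ` of `E`, and `x ≠ 0` with `τ x = -x`, the bilinear form
`B_x (v, w) = Tr_{E/F} (v * τ w * x)` is alternating, nondegenerate (on both sides),
and satisfies the adjunction `B_x (a * v, w) = B_x (v, τ a * w)`. -/
theorem stmt1 {F E : Type*} [Field F] [Field E] [Algebra F E]
    [FiniteDimensional F E] [Algebra.IsSeparable F E]
    (h2 : (2 : F) ≠ 0)
    (τ : E ≃ₐ[F] E) (hτ : ∀ y : E, τ (τ y) = y)
    (x : E) (hx0 : x ≠ 0) (hx : τ x = -x) :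
    (∀ v : E, Algebra.trace F E (v * τ v * x) = 0) ∧
    (∀ v : E, (∀ w : E, Algebra.trace F E (v * τ w * x) = 0) → v = 0) ∧
    (∀ w : E, (∀ v : E, Algebra.trace F E (v * τ w * x) = 0) → w = 0) ∧
    (∀ a v w : E,
      Algebra.trace F E ((a * v) * τ w * x) = Algebra.trace F E (v * τ (τ a * w) * x)) := by
  have key : ∀ y : E, Algebra.trace F E (τ y) = Algebra.trace F E y :=
    fun y => Algebra.trace_eq_of_algEquiv τ y
  have nd := traceForm_nondegenerate F E
  refine ⟨?_, ?_, ?_, ?_⟩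
  · intro v
    have h1 : Algebra.trace F E (τ (v * τ v * x)) = Algebra.trace F E (v * τ v * x) := key _
    simp only [map_mul, hτ, hx] at h1
    rw [show τ v * v * -x = -(v * τ v * x) by ring, map_neg] at h1
    have h2' : (2 : F) * Algebra.trace F E (v * τ v * x) = 0 := by linear_combination -h1
    exact (mul_eq_zero.mp h2').resolve_left h2
  · intro v hv
    by_contra hv0
    obtain ⟨z, hz⟩ : ∃ z, Algebra.trace F E (v * x * z) ≠ 0 := by
      by_contra hall
      push_neg at hall
      exact mul_ne_zero hv0 hx0 (nd.1 (v * x) fun z => by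
        simpa [Algebra.traceForm_apply] using hall z)
    exact hz (by simpa [mul_assoc, hτ, mul_comm, mul_left_comm] using hv (τ z))
  · intro w hw
    by_contra hw0
    have hτw : τ w ≠ 0 := fun h => hw0 (by rw [← hτ w, h, map_zero])
    obtain ⟨z, hz⟩ : ∃ z, Algebra.trace F E (τ w * x * z) ≠ 0 := by
      by_contra hall
      push_neg at hall
      exact mul_ne_zero hτw hx0 (nd.1 (τ w * x) fun z => by
        simpa [Algebra.traceForm_apply] using hall z)
    exact hz (by simpa [mul_assoc, mul_comm, mul_left_comm] using hw z)
  · intro a v w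
    simp only [map_mul, hτ]
    ring_nf
end

section
/- (Existence of an order-two point of a twisted elliptic maximal torus of GL_n, in the bilinear-form model.) Let F be a field of characteristic different from 2, E/F a finite separable field extension, and τ an F-algebra automorphism of E of order exactly 2 (τ ∘ τ = id and τ ≠ id). Then there exists a nonzero x ∈ E with τ(x) = −x, and consequently there exists a nondegenerate alternating F-bilinear form B on the F-vector space E satisfying B(a·v, w) = B(v, τ(a)·w) for all a, v, w ∈ E; namely one may take B = B_x with B_x(v, w) = Tr_{E/F}(v · τ(w) · x). -/
/-- For a finite separable extension `E/F` with `char F ≠ 2` and an `F`-algebra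
automorphism `τ` of `E` of order exactly `2`, there exists `x ≠ 0` with `τ x = -x`,
and hence the form `B_x (v, w) = Tr_{E/F} (v * τ w * x)` is a nondegenerate alternating
`F`-bilinear form on `E` satisfying `B_x (a * v, w) = B_x (v, τ a * w)`. -/
theorem stmt3 {F E : Type*} [Field F] [Field E] [Algebra F E]
    [FiniteDimensional F E] [Algebra.IsSeparable F E]
    (h2 : (2 : F) ≠ 0)
    (τ : E ≃ₐ[F] E) (hτ : ∀ y : E, τ (τ y) = y) (hτne : τ ≠ (AlgEquiv.refl : E ≃ₐ[F] E)) :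
    ∃ x : E, x ≠ 0 ∧ τ x = -x ∧
      (∀ v : E, Algebra.trace F E (v * τ v * x) = 0) ∧
      (∀ v : E, (∀ w : E, Algebra.trace F E (v * τ w * x) = 0) → v = 0) ∧
      (∀ w : E, (∀ v : E, Algebra.trace F E (v * τ w * x) = 0) → w = 0) ∧
      (∀ a v w : E,
        Algebra.trace F E ((a * v) * τ w * x) = Algebra.trace F E (v * τ (τ a * w) * x)) := by
  obtain ⟨y, hy⟩ : ∃ y : E, τ y ≠ y := by
    by_contra h
    push_neg at h
    exact hτne (AlgEquiv.ext h)
  refine ⟨y - τ y, ?_, ?_, ?_, ?_, ?_, ?_⟩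
  · intro h
    exact hy (by linear_combination -h)
  · rw [map_sub, hτ]; ring
  · intro v
    have h1 : Algebra.trace F E (τ (v * τ v * (y - τ y))) =
        Algebra.trace F E (v * τ v * (y - τ y)) :=
      Algebra.trace_eq_of_algEquiv τ _
    have h2' : τ (v * τ v * (y - τ y)) = -(v * τ v * (y - τ y)) := by
      rw [map_mul, map_mul, map_sub, hτ, hτ]; ring
    rw [h2', map_neg] at h1
    have : (2 : F) * Algebra.trace F E (v * τ v * (y - τ y)) = 0 := by
      linear_combination -h1
    exact (mul_eq_zero.mp this).resolve_left h2
  · intro v hv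
    set x := y - τ y with hx
    have hxne : x ≠ 0 := fun h => hy (by rw [hx] at h; linear_combination -h)
    have key : ∀ u : E, Algebra.trace F E (v * x * u) = 0 := by
      intro u
      have := hv (τ u)
      rwa [hτ, show v * u * x = v * x * u by ring] at this
    have hvx : v * x = 0 := by
      have := (traceForm_nondegenerate F E).1 (v * x) (fun u => by
        simpa [Algebra.traceForm_apply] using key u)
      exact this
    rcases mul_eq_zero.mp hvx with h | h
    · exact h
    · exact absurd h hxne
  · intro w hw
    set x := y - τ y with hx
    have hxne : x ≠ 0 := fun h => hy (by rw [hx] at h; linear_combination -h)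
    have key : ∀ u : E, Algebra.trace F E (τ w * x * u) = 0 := by
      intro u
      have := hw u
      rwa [show u * τ w * x = τ w * x * u by ring] at this
    have hwx : τ w * x = 0 := by
      exact (traceForm_nondegenerate F E).1 (τ w * x) (fun u => by
        simpa [Algebra.traceForm_apply] using key u)
    rcases mul_eq_zero.mp hwx with h | h
    · have := hτ w
      rw [h, map_zero] at this
      exact this.symm
    · exact absurd h hxne
  · intro a v w
    rw [show τ (τ a * w) = a * τ w by rw [map_mul, hτ]]
    congr 1
    ring
end
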